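/- Let m ∈ ℤ² be a primitive integer point (its coordinates are coprime). Define 𝔖 as the intersection, over all m' ∈ ℤ² \ {0, ±m} with |m'| ≤ |m|, of the sets {x ∈ ℝ² : ‖⟨m, x⟩‖ ≤ ‖⟨m', x⟩‖}. Then the set of all α ∈ ℝ² such that m is a best approximation for the linear form ⟨α, ·⟩ is contained in 𝔖 and contains the interior of 𝔖. -/

import Mathlib

/-- Distance from a real number to the nearest integer. -/
noncomputable def distNearestInt (t : ℝ) : ℝ := |t - round t|

/-- The integer vector `m ∈ ℤ²` viewed as a point of the Euclidean plane. -/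
noncomputable def vec (m : Fin 2 → ℤ) : EuclideanSpace ℝ (Fin 2) :=
  (WithLp.equiv 2 (Fin 2 → ℝ)).symm (fun i => (m i : ℝ))

/-- `m ∈ ℤ² \ {0}` is a best approximation for the linear form `⟨α, ·⟩` if
`‖⟨α, m⟩‖ < ‖⟨α, m'⟩‖` for every `m' ∈ ℤ² \ {0}` with `|m'| < |m|`, and
`‖⟨α, m⟩‖ ≤ ‖⟨α, m'⟩‖` for every `m' ∈ ℤ² \ {±m}` with `|m'| = |m|`. -/
def IsBestApprox (α : EuclideanSpace ℝ (Fin 2)) (m : Fin 2 → ℤ) : Prop :=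
  m ≠ 0 ∧
  (∀ m' : Fin 2 → ℤ, m' ≠ 0 → ‖vec m'‖ < ‖vec m‖ →
    distNearestInt (inner ℝ α (vec m)) < distNearestInt (inner ℝ α (vec m'))) ∧
  (∀ m' : Fin 2 → ℤ, m' ≠ m → m' ≠ -m → ‖vec m'‖ = ‖vec m‖ →
    distNearestInt (inner ℝ α (vec m)) ≤ distNearestInt (inner ℝ α (vec m')))

lemma vec_apply (m : Fin 2 → ℤ) (i : Fin 2) : vec m i = (m i : ℝ) := rfl

lemma inner_vec (m : Fin 2 → ℤ) (x : EuclideanSpace ℝ (Fin 2)) :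
    (inner ℝ (vec m) x : ℝ) = m 0 * x 0 + m 1 * x 1 := by
  simp [PiLp.inner_apply, Fin.sum_univ_two, vec_apply, RCLike.inner_apply]
  ring

lemma dni_int_add (n : ℤ) (y : ℝ) : distNearestInt (n + y) = distNearestInt y := by
  unfold distNearestInt
  rw [round_intCast_add]
  push_cast
  ring_nf

lemma dni_eq_abs {y : ℝ} (h : |y| ≤ 1/2) : distNearestInt y = |y| := by
  unfold distNearestInt
  rcases eq_or_lt_of_le h with heq | hlt
  · rcases (abs_eq (by norm_num : (0:ℝ) ≤ 1/2)).mp heq with rfl | rfl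
    · norm_num [round_eq]
    · norm_num [round_eq]
  · have h0 : round y = 0 := by
      rw [round_eq_zero_iff]
      have := abs_lt.mp hlt
      constructor <;> [linarith [this.1]; linarith [this.2]]
    rw [h0]; simp

lemma norm_vec_sq (m : Fin 2 → ℤ) : ‖vec m‖^2 = (m 0:ℝ)^2 + (m 1:ℝ)^2 := by
  rw [EuclideanSpace.norm_eq, Real.sq_sqrt (by positivity)]
  simp [Fin.sum_univ_two, vec_apply, sq_abs]

lemma vec_neg (m : Fin 2 → ℤ) : vec (-m) = -vec m := by
  ext i
  show (((-m) i : ℤ) : ℝ) = -(vec m i)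
  rw [vec_apply]
  push_cast
  simp

lemma vec_eq_zero {m : Fin 2 → ℤ} (h : vec m = 0) : m = 0 := by
  funext i
  have := congrArg (fun v => v i) h
  rw [vec_apply, WithLp.ofLp_zero, Pi.zero_apply] at this
  simpa using this

lemma det_ne_zero {m m' : Fin 2 → ℤ} (hm : IsCoprime (m 0) (m 1)) (hm' : m' ≠ 0)
    (hlt : ‖vec m'‖ < ‖vec m‖) : m 0 * m' 1 - m 1 * m' 0 ≠ 0 := by
  intro hd
  have hd' : m 0 * m' 1 = m 1 * m' 0 := by omega
  obtain ⟨k, hk0, hk1⟩ : ∃ k : ℤ, m' 0 = k * m 0 ∧ m' 1 = k * m 1 := by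
    by_cases h0 : m 0 = 0
    · have hu : IsUnit (m 1) := isCoprime_zero_left.mp (h0 ▸ hm)
      have h1 : m 1 = 1 ∨ m 1 = -1 := Int.isUnit_iff.mp hu
      have h2 : m' 0 = 0 := by
        rcases h1 with h1 | h1 <;> rw [h0, h1] at hd' <;> omega
      refine ⟨m' 1 * m 1, by rw [h2, h0]; ring, ?_⟩
      rcases h1 with h1 | h1 <;> rw [h1] <;> ring
    · obtain ⟨k, hk⟩ : m 0 ∣ m' 0 := hm.dvd_of_dvd_mul_left ⟨m' 1, hd'.symm⟩
      refine ⟨k, by rw [hk]; ring, ?_⟩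
      have h2 : m 0 * m' 1 = m 0 * (k * m 1) := by rw [hd', hk]; ring
      exact mul_left_cancel₀ h0 h2
  have hk0' : k ≠ 0 := by
    rintro rfl
    exact hm' (funext fun i => by fin_cases i <;> simp [hk0, hk1])
  have hmz : ¬(m 0 = 0 ∧ m 1 = 0) := by
    rintro ⟨a, b⟩; rw [a, b] at hm; exact not_isCoprime_zero_zero hm
  have hsq : ‖vec m'‖^2 < ‖vec m‖^2 :=
    pow_lt_pow_left₀ hlt (norm_nonneg _) (by norm_num)
  rw [norm_vec_sq, norm_vec_sq] at hsq
  have hZ : m' 0^2 + m' 1^2 < m 0^2 + m 1^2 := by exact_mod_cast hsq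
  have h1k : 1 ≤ k^2 := by nlinarith [Int.one_le_abs hk0', sq_abs k]
  have hpos0 : 0 < m 0^2 + m 1^2 := by
    rcases not_and_or.mp hmz with h | h
    · have : 0 < m 0^2 := by positivity
      nlinarith [sq_nonneg (m 1)]
    · have : 0 < m 1^2 := by positivity
      nlinarith [sq_nonneg (m 0)]
  rw [hk0, hk1] at hZ
  nlinarith [hZ, h1k, hpos0]

/-- Let `m ∈ ℤ²` be a primitive point and let `𝔖` be the intersection over all
`m' ∈ ℤ² \ {0, ±m}` with `|m'| ≤ |m|` of the sets `{x ∈ ℝ² : ‖⟨m, x⟩‖ ≤ ‖⟨m', x⟩‖}`.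
Then the set of all `α ∈ ℝ²` such that `m` is a best approximation for `⟨α, ·⟩` is
contained in `𝔖` and contains the interior of `𝔖`. -/
theorem best_approximation_domain
    (m : Fin 2 → ℤ) (hm : IsCoprime (m 0) (m 1))
    (𝔖 : Set (EuclideanSpace ℝ (Fin 2)))
    (h𝔖 : 𝔖 = ⋂ m' ∈ {m' : Fin 2 → ℤ | m' ≠ 0 ∧ m' ≠ m ∧ m' ≠ -m ∧ ‖vec m'‖ ≤ ‖vec m‖},
      {x : EuclideanSpace ℝ (Fin 2) |
        distNearestInt (inner ℝ (vec m) x) ≤ distNearestInt (inner ℝ (vec m') x)}) :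
    {α : EuclideanSpace ℝ (Fin 2) | IsBestApprox α m} ⊆ 𝔖 ∧
    interior 𝔖 ⊆ {α : EuclideanSpace ℝ (Fin 2) | IsBestApprox α m} := by
  have hm0 : m ≠ 0 := by
    rintro rfl
    simp only [Pi.zero_apply] at hm
    exact not_isCoprime_zero_zero hm
  have hS : ∀ x ∈ 𝔖, ∀ m' : Fin 2 → ℤ, m' ≠ 0 → m' ≠ m → m' ≠ -m → ‖vec m'‖ ≤ ‖vec m‖ →
      distNearestInt (inner ℝ (vec m) x) ≤ distNearestInt (inner ℝ (vec m') x) := by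
    intro x hx m' h1 h2 h3 h4
    rw [h𝔖] at hx
    exact Set.mem_iInter₂.mp hx m' ⟨h1, h2, h3, h4⟩
  constructor
  · -- best approx points lie in 𝔖
    intro α hα
    rw [h𝔖]
    refine Set.mem_iInter₂.mpr ?_
    rintro m' ⟨h1, h2, h3, h4⟩
    simp only [Set.mem_setOf_eq]
    rw [real_inner_comm α (vec m), real_inner_comm α (vec m')]
    rcases lt_or_eq_of_le h4 with h | h
    · exact le_of_lt (hα.2.1 m' h1 h)
    · exact hα.2.2 m' h2 h3 h
  · -- interior of 𝔖 consists of best approx points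
    intro α hα
    obtain ⟨ε, hε, hball⟩ := Metric.mem_nhds_iff.mp (mem_interior_iff_mem_nhds.mp hα)
    have hαS : α ∈ 𝔖 := interior_subset hα
    refine ⟨hm0, ?_, ?_⟩
    · -- strict inequality for shorter vectors
      intro m' hm'0 hlt
      have hnm : m' ≠ m := by rintro rfl; exact lt_irrefl _ hlt
      have hnm2 : m' ≠ -m := by
        rintro rfl; rw [vec_neg, norm_neg] at hlt; exact lt_irrefl _ hlt
      have hle := hS α hαS m' hm'0 hnm hnm2 hlt.le
      rw [real_inner_comm α (vec m), real_inner_comm α (vec m')] at hle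
      refine lt_of_le_of_ne hle ?_
      intro hcontra
      rw [real_inner_comm (vec m) α, real_inner_comm (vec m') α] at hcontra
      -- notation
      set A : ℝ := inner ℝ (vec m) α with hA
      set B : ℝ := inner ℝ (vec m') α with hB
      set a : ℝ := A - round A with ha
      set b : ℝ := B - round B with hb
      have hdniA : distNearestInt A = |a| := rfl
      have hdniB : distNearestInt B = |b| := rfl
      have hab : |a| = |b| := by rw [← hdniA, ← hdniB]; exact hcontra
      have hd : m 0 * m' 1 - m 1 * m' 0 ≠ 0 := det_ne_zero hm hm'0 hlt
      set d : ℤ := m 0 * m' 1 - m 1 * m' 0 with hdd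
      have hdR : (d : ℝ) ≠ 0 := Int.cast_ne_zero.mpr hd
      have hahalf : |a| ≤ 1/2 := abs_sub_round A
      rcases lt_or_eq_of_le hahalf with hlt2 | heq2
      · -- case ‖A‖ < 1/2 : move along direction with ⟨m,v⟩=1, ⟨m',v⟩=0
        set v : EuclideanSpace ℝ (Fin 2) :=
          (WithLp.equiv 2 (Fin 2 → ℝ)).symm ![(d:ℝ)⁻¹ * m' 1, -((d:ℝ)⁻¹ * m' 0)] with hv
        have hv0 : v 0 = (d:ℝ)⁻¹ * m' 1 := rfl
        have hv1 : v 1 = -((d:ℝ)⁻¹ * m' 0) := rfl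
        have h1 : (inner ℝ (vec m) v : ℝ) = 1 := by
          rw [inner_vec, hv0, hv1]
          field_simp
          push_cast [hdd]
          ring
        have h0 : (inner ℝ (vec m') v : ℝ) = 0 := by
          rw [inner_vec, hv0, hv1]
          field_simp
          ring
        set τ : ℝ := min (ε / (‖v‖ + 1)) ((1/2 - |a|)/2) with hτdef
        have hτ : 0 < τ := by
          apply lt_min
          · positivity
          · linarith
        have hτ1 : τ ≤ ε / (‖v‖ + 1) := min_le_left _ _
        have hτ2 : τ ≤ (1/2 - |a|)/2 := min_le_right _ _
        set σ : ℝ := if 0 ≤ a then (1:ℝ) else -1 with hσ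
        set x : EuclideanSpace ℝ (Fin 2) := α + (σ * τ) • v with hx
        have hσa : |σ| = 1 := by
          rw [hσ]; split_ifs <;> norm_num
        have hxball : x ∈ Metric.ball α ε := by
          rw [Metric.mem_ball, dist_eq_norm, hx, add_sub_cancel_left, norm_smul,
            Real.norm_eq_abs, abs_mul, hσa, one_mul, abs_of_pos hτ]
          calc τ * ‖v‖ ≤ ε / (‖v‖ + 1) * ‖v‖ := by
                apply mul_le_mul_of_nonneg_right hτ1 (norm_nonneg _)
            _ < ε := by
                rw [div_mul_eq_mul_div, div_lt_iff₀ (by positivity)]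
                nlinarith [norm_nonneg v]
        have hxm : (inner ℝ (vec m) x : ℝ) = A + σ * τ := by
          rw [hx, inner_add_right, real_inner_smul_right, h1, mul_one, ← hA]
        have hxm' : (inner ℝ (vec m') x : ℝ) = B := by
          rw [hx, inner_add_right, real_inner_smul_right, h0, mul_zero, add_zero, ← hB]
        have habs : |a + σ * τ| = |a| + τ := by
          rw [hσ]
          split_ifs with h
          · rw [one_mul, abs_of_nonneg (by linarith), abs_of_nonneg h]
          · have ha' : a < 0 := lt_of_not_ge h
            have : a + (-1) * τ = -(-a + τ) := by ring
            rw [this, abs_neg, abs_of_nonneg (by linarith), abs_of_neg ha']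
        have key1 : distNearestInt (inner ℝ (vec m) x) = |a| + τ := by
          rw [hxm]
          have hrw : A + σ * τ = ((round A : ℤ) : ℝ) + (a + σ * τ) := by
            rw [ha]; ring
          rw [hrw, dni_int_add, dni_eq_abs (by rw [habs]; linarith), habs]
        have key2 : distNearestInt (inner ℝ (vec m') x) = |a| := by
          rw [hxm', hdniB, ← hab]
        have := hS x (hball hxball) m' hm'0 hnm hnm2 hlt.le
        rw [key1, key2] at this
        linarith
      · -- case ‖A‖ = 1/2 : move along direction with ⟨m,v⟩=0, ⟨m',v⟩=1
        have hbhalf : |b| = 1/2 := by rw [← hab, ← heq2]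
        set v : EuclideanSpace ℝ (Fin 2) :=
          (WithLp.equiv 2 (Fin 2 → ℝ)).symm ![-((d:ℝ)⁻¹ * m 1), (d:ℝ)⁻¹ * m 0] with hv
        have hv0 : v 0 = -((d:ℝ)⁻¹ * m 1) := rfl
        have hv1 : v 1 = (d:ℝ)⁻¹ * m 0 := rfl
        have h1 : (inner ℝ (vec m) v : ℝ) = 0 := by
          rw [inner_vec, hv0, hv1]
          field_simp
          ring
        have h0 : (inner ℝ (vec m') v : ℝ) = 1 := by
          rw [inner_vec, hv0, hv1]
          field_simp
          push_cast [hdd]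
          ring
        set τ : ℝ := min (ε / (‖v‖ + 1)) (1/4) with hτdef
        have hτ : 0 < τ := by
          apply lt_min
          · positivity
          · norm_num
        have hτ1 : τ ≤ ε / (‖v‖ + 1) := min_le_left _ _
        have hτ2 : τ ≤ 1/4 := min_le_right _ _
        set t : ℝ := -2 * b * τ with ht
        have htabs : |t| = τ := by
          rw [ht, abs_mul, abs_mul, hbhalf, abs_of_pos hτ]
          norm_num
        set x : EuclideanSpace ℝ (Fin 2) := α + t • v with hx
        have hxball : x ∈ Metric.ball α ε := by
          rw [Metric.mem_ball, dist_eq_norm, hx, add_sub_cancel_left, norm_smul, Real.norm_eq_abs, htabs]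
          calc τ * ‖v‖ ≤ ε / (‖v‖ + 1) * ‖v‖ := by
                apply mul_le_mul_of_nonneg_right hτ1 (norm_nonneg _)
            _ < ε := by
                rw [div_mul_eq_mul_div, div_lt_iff₀ (by positivity)]
                nlinarith [norm_nonneg v]
        have hxm : (inner ℝ (vec m) x : ℝ) = A := by
          rw [hx, inner_add_right, real_inner_smul_right, h1, mul_zero, add_zero, ← hA]
        have hxm' : (inner ℝ (vec m') x : ℝ) = B + t := by
          rw [hx, inner_add_right, real_inner_smul_right, h0, mul_one, ← hB]
        have habs : |b + t| = 1/2 - τ := by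
          rw [ht]
          have hrw : b + -2 * b * τ = b * (1 - 2*τ) := by ring
          rw [hrw, abs_mul, hbhalf, abs_of_nonneg (by linarith)]
          ring
        have key1 : distNearestInt (inner ℝ (vec m) x) = 1/2 := by
          rw [hxm, hdniA, heq2]
        have key2 : distNearestInt (inner ℝ (vec m') x) = 1/2 - τ := by
          rw [hxm']
          have hrw : B + t = ((round B : ℤ) : ℝ) + (b + t) := by
            rw [hb]; ring
          rw [hrw, dni_int_add, dni_eq_abs (by rw [habs]; linarith), habs]
        have := hS x (hball hxball) m' hm'0 hnm hnm2 hlt.le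
        rw [key1, key2] at this
        linarith
    · -- weak inequality for equal-length vectors
      intro m' h2 h3 heq
      have hm'0 : m' ≠ 0 := by
        rintro rfl
        have hz : vec (0 : Fin 2 → ℤ) = 0 := by
          ext i; show ((0:ℤ):ℝ) = _; simp
        rw [hz, norm_zero] at heq
        exact hm0 (vec_eq_zero (norm_eq_zero.mp heq.symm))
      have hle := hS α hαS m' hm'0 h2 h3 heq.le
      rwa [real_inner_comm α (vec m), real_inner_comm α (vec m')] at hle
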